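/- Let 0 < p < 1, 0 < b < 1, and c > 0. Define r(k) = p + (1−p)·((1+c·k)^b − 1)/(c·k) for k > 0. Then: (1) r is strictly decreasing on (0, ∞); (2) r is strictly convex on (0, ∞); (3) r(k) → p as k → +∞. -/

import Mathlib

open Filter Set

private noncomputable def nn (b x : ℝ) : ℝ :=
  b * x * (1 + x) ^ (b - 1) - (1 + x) ^ b + 1

private noncomputable def pphi (b x : ℝ) : ℝ :=
  b * (b - 1) * x ^ 2 * (1 + x) ^ (b - 2) - 2 * b * x * (1 + x) ^ (b - 1)
    + 2 * (1 + x) ^ b - 2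

private noncomputable def FF (b x : ℝ) : ℝ := ((1 + x) ^ b - 1) / x

private noncomputable def FF1 (b x : ℝ) : ℝ := nn b x / x ^ 2

private lemma hasDerivAt_one_add (x : ℝ) : HasDerivAt (fun t : ℝ => 1 + t) 1 x :=
  (hasDerivAt_id x).const_add 1

private lemma hasDerivAt_rpow_aux (b x e : ℝ) (hx : (0:ℝ) < 1 + x) :
    HasDerivAt (fun t : ℝ => (1 + t) ^ e) (e * (1 + x) ^ (e - 1)) x := by
  simpa using (hasDerivAt_one_add x).rpow_const (Or.inl hx.ne')

private lemma hasDerivAt_nn (b x : ℝ) (hx : (0:ℝ) < 1 + x) :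
    HasDerivAt (nn b) (b * (b - 1) * x * (1 + x) ^ (b - 2)) x := by
  have hpow1 := hasDerivAt_rpow_aux b x (b - 1) hx
  have hpow := hasDerivAt_rpow_aux b x b hx
  have hbt : HasDerivAt (fun t : ℝ => b * t) b x := by
    simpa using (hasDerivAt_id x).const_mul b
  have h := ((hbt.mul hpow1).sub hpow).add_const 1
  have : HasDerivAt (nn b)
      ((b * (1 + x) ^ (b - 1) + b * x * ((b - 1) * (1 + x) ^ (b - 1 - 1)))
        - b * (1 + x) ^ (b - 1)) x := h
  convert this using 1
  rw [show b - 1 - 1 = b - 2 by ring]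
  ring

private lemma nn_neg (b : ℝ) (hb0 : 0 < b) (hb1 : b < 1) {x : ℝ} (hx : 0 < x) :
    nn b x < 0 := by
  have key : StrictAntiOn (nn b) (Ici 0) := by
    apply strictAntiOn_of_deriv_neg (convex_Ici 0)
    · intro t ht
      exact (hasDerivAt_nn b t (by simp at ht; linarith)).continuousAt.continuousWithinAt
    · intro t ht
      rw [interior_Ici] at ht
      have ht' : (0:ℝ) < 1 + t := by linarith [ht.out]
      rw [(hasDerivAt_nn b t ht').deriv]
      have hP : (0:ℝ) < (1 + t) ^ (b - 2) := Real.rpow_pos_of_pos ht' _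
      have h1 : (0:ℝ) < b * t * (1 + t) ^ (b - 2) := mul_pos (mul_pos hb0 ht.out) hP
      nlinarith
  have h0 : nn b 0 = 0 := by simp [nn, Real.one_rpow]
  have := key (self_mem_Ici) (by exact le_of_lt hx) hx
  rwa [h0] at this

private lemma hasDerivAt_pphi (b x : ℝ) (hx : (0:ℝ) < 1 + x) :
    HasDerivAt (pphi b) (b * (b - 1) * (b - 2) * x ^ 2 * (1 + x) ^ (b - 3)) x := by
  have hpow2 := hasDerivAt_rpow_aux b x (b - 2) hx
  have hpow1 := hasDerivAt_rpow_aux b x (b - 1) hx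
  have hpow := hasDerivAt_rpow_aux b x b hx
  have hsq : HasDerivAt (fun t : ℝ => b * (b - 1) * t ^ 2) (b * (b - 1) * (2 * x)) x := by
    simpa [mul_comm, mul_assoc, mul_left_comm] using
      ((hasDerivAt_pow 2 x).const_mul (b * (b - 1)))
  have h2bt : HasDerivAt (fun t : ℝ => 2 * b * t) (2 * b) x := by
    simpa using (hasDerivAt_id x).const_mul (2 * b)
  have h := (((hsq.mul hpow2).sub (h2bt.mul hpow1)).add (hpow.const_mul 2)).sub_const 2
  have h' : HasDerivAt (pphi b)
      ((b * (b - 1) * (2 * x) * (1 + x) ^ (b - 2)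
          + b * (b - 1) * x ^ 2 * ((b - 2) * (1 + x) ^ (b - 2 - 1)))
        - (2 * b * (1 + x) ^ (b - 1) + 2 * b * x * ((b - 1) * (1 + x) ^ (b - 1 - 1)))
        + 2 * (b * (1 + x) ^ (b - 1))) x := h
  convert h' using 1
  rw [show b - 2 - 1 = b - 3 by ring, show b - 1 - 1 = b - 2 by ring]
  ring

private lemma pphi_pos (b : ℝ) (hb0 : 0 < b) (hb1 : b < 1) {x : ℝ} (hx : 0 < x) :
    0 < pphi b x := by
  have key : StrictMonoOn (pphi b) (Ici 0) := by
    apply strictMonoOn_of_deriv_pos (convex_Ici 0)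
    · intro t ht
      exact (hasDerivAt_pphi b t (by simp at ht; linarith)).continuousAt.continuousWithinAt
    · intro t ht
      rw [interior_Ici] at ht
      have ht' : (0:ℝ) < 1 + t := by linarith [ht.out]
      rw [(hasDerivAt_pphi b t ht').deriv]
      have hP : (0:ℝ) < (1 + t) ^ (b - 3) := Real.rpow_pos_of_pos ht' _
      have h12 : 0 < (b - 1) * (b - 2) := mul_pos_of_neg_of_neg (by linarith) (by linarith)
      have h1 : 0 < b * ((b - 1) * (b - 2)) * (t ^ 2 * (1 + t) ^ (b - 3)) :=
        mul_pos (mul_pos hb0 h12) (mul_pos (pow_pos ht.out 2) hP)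
      nlinarith
  have h0 : pphi b 0 = 0 := by simp [pphi, Real.one_rpow]
  have := key (self_mem_Ici) (by exact le_of_lt hx) hx
  rwa [h0] at this

private lemma hasDerivAt_FF (b : ℝ) {x : ℝ} (hx : 0 < x) :
    HasDerivAt (FF b) (FF1 b x) x := by
  have hx1 : (0:ℝ) < 1 + x := by linarith
  have hnum : HasDerivAt (fun t : ℝ => (1 + t) ^ b - 1) (b * (1 + x) ^ (b - 1)) x :=
    (hasDerivAt_rpow_aux b x b hx1).sub_const 1
  have h := hnum.div (hasDerivAt_id x) hx.ne'
  have h' : HasDerivAt (FF b)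
      ((b * (1 + x) ^ (b - 1) * x - ((1 + x) ^ b - 1) * 1) / x ^ 2) x := h
  convert h' using 1
  unfold FF1 nn
  ring

private lemma hasDerivAt_FF1 (b : ℝ) {x : ℝ} (hx : 0 < x) :
    HasDerivAt (FF1 b) (pphi b x / x ^ 3) x := by
  have hx1 : (0:ℝ) < 1 + x := by linarith
  have hden : HasDerivAt (fun t : ℝ => t ^ 2) (2 * x) x := by
    simpa using hasDerivAt_pow 2 x
  have h := (hasDerivAt_nn b x hx1).div hden (pow_ne_zero 2 hx.ne')
  have h' : HasDerivAt (FF1 b)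
      ((b * (b - 1) * x * (1 + x) ^ (b - 2) * x ^ 2 - nn b x * (2 * x)) / (x ^ 2) ^ 2) x := h
  convert h' using 1
  unfold pphi nn
  field_simp
  ring

private lemma FF_anti (b : ℝ) (hb0 : 0 < b) (hb1 : b < 1) :
    StrictAntiOn (FF b) (Ioi 0) := by
  apply strictAntiOn_of_deriv_neg (convex_Ioi 0)
  · exact fun t ht => (hasDerivAt_FF b ht.out).continuousAt.continuousWithinAt
  · intro t ht
    rw [interior_Ioi] at ht
    rw [(hasDerivAt_FF b ht.out).deriv]
    exact div_neg_of_neg_of_pos (nn_neg b hb0 hb1 ht.out) (pow_pos ht.out 2)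

private lemma FF1_mono (b : ℝ) (hb0 : 0 < b) (hb1 : b < 1) :
    StrictMonoOn (FF1 b) (Ioi 0) := by
  apply strictMonoOn_of_deriv_pos (convex_Ioi 0)
  · exact fun t ht => (hasDerivAt_FF1 b ht.out).continuousAt.continuousWithinAt
  · intro t ht
    rw [interior_Ioi] at ht
    rw [(hasDerivAt_FF1 b ht.out).deriv]
    exact div_pos (pphi_pos b hb0 hb1 ht.out) (pow_pos ht.out 3)

private lemma FF_convex (b : ℝ) (hb0 : 0 < b) (hb1 : b < 1) :
    StrictConvexOn ℝ (Ioi 0) (FF b) := by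
  apply StrictMonoOn.strictConvexOn_of_deriv (convex_Ioi 0)
  · exact fun t ht => (hasDerivAt_FF b ht.out).continuousAt.continuousWithinAt
  · rw [interior_Ioi]
    intro x hx y hy hxy
    rw [(hasDerivAt_FF b hx.out).deriv, (hasDerivAt_FF b hy.out).deriv]
    exact FF1_mono b hb0 hb1 hx hy hxy

private lemma FF_tendsto (b : ℝ) (hb0 : 0 < b) (hb1 : b < 1) :
    Tendsto (FF b) atTop (nhds 0) := by
  have hupper : Tendsto (fun x : ℝ => 2 ^ b * x ^ (b - 1)) atTop (nhds 0) := by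
    have h1 : Tendsto (fun x : ℝ => x ^ (b - 1)) atTop (nhds 0) := by
      have := tendsto_rpow_neg_atTop (y := 1 - b) (by linarith)
      simpa [neg_sub] using this
    simpa using h1.const_mul ((2:ℝ) ^ b)
  apply tendsto_of_tendsto_of_tendsto_of_le_of_le' (tendsto_const_nhds (x := (0:ℝ))) hupper
  · filter_upwards [eventually_ge_atTop (1:ℝ)] with x hx1
    have hx : (0:ℝ) < x := by linarith
    have h1 : (1:ℝ) ≤ (1 + x) ^ b := by
      calc (1:ℝ) = 1 ^ b := (Real.one_rpow b).symm
        _ ≤ (1 + x) ^ b := Real.rpow_le_rpow zero_le_one (by linarith) hb0.le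
    exact div_nonneg (by linarith) hx.le
  · filter_upwards [eventually_ge_atTop (1:ℝ)] with x hx1
    have hx : (0:ℝ) < x := by linarith
    have h2 : (1 + x) ^ b ≤ (2 * x) ^ b :=
      Real.rpow_le_rpow (by linarith) (by linarith) hb0.le
    have h3 : (2 * x) ^ b = 2 ^ b * x ^ b := Real.mul_rpow (by norm_num) hx.le
    have h4 : FF b x ≤ 2 ^ b * x ^ b / x := by
      unfold FF
      exact (div_le_div_iff_of_pos_right hx).mpr (by linarith [h2, h3])
    calc FF b x ≤ 2 ^ b * x ^ b / x := h4
      _ = 2 ^ b * x ^ (b - 1) := by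
          rw [mul_div_assoc, Real.rpow_sub hx, Real.rpow_one]

open Filter

/-- The same-type share `r(k) = p + (1−p)·((1+ck)^b − 1)/(ck)` is strictly decreasing,
strictly convex on `(0, ∞)`, and converges to `p` as `k → ∞`. -/
theorem stmt11 (p b c : ℝ) (hp : p ∈ Set.Ioo (0 : ℝ) 1) (hb : b ∈ Set.Ioo (0 : ℝ) 1)
    (hc : 0 < c) :
    let r : ℝ → ℝ := fun k => p + (1 - p) * (((1 + c * k) ^ b - 1) / (c * k))
    StrictAntiOn r (Set.Ioi 0) ∧
    StrictConvexOn ℝ (Set.Ioi 0) r ∧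
    Tendsto r atTop (nhds p) := by
  intro r
  obtain ⟨hb0, hb1⟩ := hb
  have hq : 0 < 1 - p := by linarith [hp.2]
  have hr : ∀ k, r k = p + (1 - p) * FF b (c * k) := fun k => rfl
  refine ⟨?_, ?_, ?_⟩
  · intro k₁ h₁ k₂ h₂ hlt
    have hF := FF_anti b hb0 hb1 (mul_pos hc h₁.out) (mul_pos hc h₂.out)
      (mul_lt_mul_of_pos_left hlt hc)
    rw [hr, hr]
    nlinarith [mul_lt_mul_of_pos_left hF hq]
  · refine ⟨convex_Ioi 0, ?_⟩
    intro x hx y hy hxy a a' ha ha' hab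
    simp only [smul_eq_mul]
    have hcx : c * x ∈ Ioi (0:ℝ) := mul_pos hc hx.out
    have hcy : c * y ∈ Ioi (0:ℝ) := mul_pos hc hy.out
    have hne : c * x ≠ c * y := fun h => hxy (mul_left_cancel₀ hc.ne' h)
    have key := (FF_convex b hb0 hb1).2 hcx hcy hne ha ha' hab
    simp only [smul_eq_mul] at key
    rw [hr, hr, hr, show c * (a * x + a' * y) = a * (c * x) + a' * (c * y) by ring]
    have h0 : a * p + a' * p = p := by rw [← add_mul, hab, one_mul]
    nlinarith [mul_lt_mul_of_pos_left key hq]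
  · have hck : Tendsto (fun k : ℝ => c * k) atTop atTop :=
      Tendsto.const_mul_atTop hc tendsto_id
    have hF : Tendsto (fun k : ℝ => FF b (c * k)) atTop (nhds 0) :=
      (FF_tendsto b hb0 hb1).comp hck
    have := (hF.const_mul (1 - p)).const_add p
    simp only [mul_zero, add_zero] at this; exact this
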